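/- Let $m > 1$ be an integer, and let $h/k \in \mathcal{F}(\mathbb{B}(2m),m)$ (in lowest terms) with $0/1 \le h/k < 1/2$. Let $x_0$ be the (unique) integer satisfying $h x_0 \equiv -1 \pmod{k-h}$ and $m - k + h + 1 \le x_0 \le m$. Then the fraction with numerator $(h x_0 + 1)/(k-h)$ and denominator $(k x_0 + 1)/(k-h)$ (both of which are integers) is the fraction immediately succeeding $h/k$ in $\mathcal{F}(\mathbb{B}(2m),m)$, i.e., it is the smallest element of $\mathcal{F}(\mathbb{B}(2m),m)$ that is strictly greater than $h/k$. -/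
import Mathlib


/-- The Farey subsequence `𝓕(𝔹(2m), m)`: rationals `q` with `0 ≤ q ≤ 1` whose
reduced fraction `h/k` satisfies `k ≤ 2m`, `h ≤ m` and `k - h ≤ m`. -/
def fareyB2 (m : ℕ) : Set ℚ :=
  {q : ℚ | 0 ≤ q ∧ q ≤ 1 ∧ q.den ≤ 2 * m ∧ q.num ≤ (m : ℤ) ∧
    (q.den : ℤ) - q.num ≤ (m : ℤ)}

set_option maxHeartbeats 1000000 in
/-- Successor formula in `𝓕(𝔹(2m), m)`: for `0/1 ≤ h/k < 1/2` in the sequence and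
`x₀` with `h·x₀ ≡ -1 (mod k-h)` and `m-k+h+1 ≤ x₀ ≤ m`, the numbers `(h·x₀+1)/(k-h)` and
`(k·x₀+1)/(k-h)` are integers, and the corresponding fraction is the fraction immediately
succeeding `h/k`, i.e. the least element of `𝓕(𝔹(2m), m)` strictly above `h/k`. -/
theorem fareyB2_succ (m : ℕ) (hm : 1 < m) (q : ℚ) (hq : q ∈ fareyB2 m)
    (hq0 : 0 ≤ q) (hq2 : q < 1 / 2) (x₀ : ℤ)
    (hmod : q.num * x₀ ≡ -1 [ZMOD ((q.den : ℤ) - q.num)])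
    (hlo : (m : ℤ) - (q.den : ℤ) + q.num + 1 ≤ x₀) (hhi : x₀ ≤ (m : ℤ)) :
    ((q.den : ℤ) - q.num) ∣ (q.num * x₀ + 1) ∧
    ((q.den : ℤ) - q.num) ∣ ((q.den : ℤ) * x₀ + 1) ∧
    IsLeast {f ∈ fareyB2 m | q < f}
      (((q.num * x₀ + 1 : ℤ) : ℚ) / (((q.den : ℤ) * x₀ + 1 : ℤ) : ℚ)) := by
  obtain ⟨-, hq1, hden2m, hnum_m, hdmn⟩ := hq
  set h : ℤ := q.num with hh
  set k : ℤ := (q.den : ℤ) with hk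
  set d : ℤ := k - h with hd
  have hh0 : 0 ≤ h := Rat.num_nonneg.mpr hq0
  have hk0 : (0 : ℤ) < k := by rw [hk]; exact_mod_cast q.pos
  have hkQ : (0 : ℚ) < (k : ℚ) := by exact_mod_cast hk0
  have hm1 : (1 : ℤ) ≤ (m : ℤ) := by exact_mod_cast hm.le
  have hqeq : (h : ℚ) / (k : ℚ) = q := Rat.num_div_den q
  -- from q < 1/2 : 2h < k
  have h2hk : 2 * h < k := by
    have h1 : (h : ℚ) / (k : ℚ) < 1 / 2 := hqeq ▸ hq2
    rw [div_lt_div_iff₀ hkQ (by norm_num : (0:ℚ) < 2)] at h1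
    have h1' : ((2 * h : ℤ) : ℚ) < ((k : ℤ) : ℚ) := by push_cast; linarith
    exact_mod_cast h1'
  have hd0 : 0 < d := by omega
  have hx1 : 1 ≤ x₀ := by omega
  -- divisibility
  have hdvd1 : d ∣ h * x₀ + 1 := by
    obtain ⟨t, ht⟩ := (Int.modEq_iff_dvd).mp hmod
    exact ⟨-t, by linarith⟩
  have hdvd2 : d ∣ k * x₀ + 1 := by
    have e : k * x₀ + 1 = (h * x₀ + 1) + d * x₀ := by ring
    rw [e]
    exact dvd_add hdvd1 (Dvd.intro _ rfl)
  refine ⟨hdvd1, hdvd2, ?_⟩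
  obtain ⟨a, ha⟩ := hdvd1
  obtain ⟨b, hb⟩ := hdvd2
  -- key identities
  have hba : b - a = x₀ := by
    have e : d * (b - a) = d * x₀ := by rw [mul_sub, ← ha, ← hb]; ring
    exact mul_left_cancel₀ hd0.ne' e
  have hkey : k * a - h * b = 1 := by
    have e : d * (k * a - h * b) = d * 1 := by
      have e1 : k * (d * a) - h * (d * b) = d * (k * a - h * b) := by ring
      have e2 : k * (h * x₀ + 1) - h * (k * x₀ + 1) = d := by ring
      rw [ha, hb] at e2
      linarith [e1, e2]
    exact mul_left_cancel₀ hd0.ne' e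
  have ha1 : 1 ≤ a := by
    have e : 0 < d * a := by
      rw [← ha]
      nlinarith [mul_nonneg hh0 (by linarith : (0:ℤ) ≤ x₀)]
    nlinarith [e, hd0]
  have ham : a ≤ (m : ℤ) := by
    have e : d * a ≤ d * (m : ℤ) := by
      rw [← ha]
      have t1 : h * x₀ ≤ h * (m : ℤ) := mul_le_mul_of_nonneg_left hhi hh0
      have t2 : h * (m : ℤ) ≤ (d - 1) * (m : ℤ) :=
        mul_le_mul_of_nonneg_right (by omega) (by linarith)
      nlinarith [t1, t2]
    exact le_of_mul_le_mul_left e hd0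
  have hbpos : (0 : ℤ) < b := by omega
  have hbQ : (0 : ℚ) < (b : ℚ) := by exact_mod_cast hbpos
  -- the target rational equals a / b
  have hcop : Nat.Coprime a.natAbs b.natAbs := by
    have e : IsCoprime a b := ⟨k, -h, by linarith [hkey]⟩
    exact Int.isCoprime_iff_gcd_eq_one.mp e
  have hval : (((h * x₀ + 1 : ℤ) : ℚ) / ((k * x₀ + 1 : ℤ) : ℚ)) = (a : ℚ) / (b : ℚ) := by
    rw [ha, hb]
    push_cast
    rw [mul_div_mul_left]
    exact_mod_cast hd0.ne'
  have hnum : ((a : ℚ) / (b : ℚ)).num = a := Rat.num_div_eq_of_coprime hbpos hcop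
  have hden : (((a : ℚ) / (b : ℚ)).den : ℤ) = b := Rat.den_div_eq_of_coprime hbpos hcop
  rw [hval]
  constructor
  · refine ⟨⟨?_, ?_, ?_, ?_, ?_⟩, ?_⟩
    · exact div_nonneg (by exact_mod_cast (by omega : (0:ℤ) ≤ a)) hbQ.le
    · rw [div_le_one hbQ]
      have e : a ≤ b := by omega
      exact_mod_cast e
    · omega
    · rw [hnum]; exact ham
    · rw [hnum, hden]; omega
    · rw [← hqeq, div_lt_div_iff₀ hkQ hbQ]
      have e : h * b < a * k := by linarith [hkey]
      exact_mod_cast e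
  · rintro f ⟨⟨hf0, hf1, hfden, hfnum, hfdmn⟩, hqf⟩
    set c : ℤ := f.num with hc
    set e : ℤ := (f.den : ℤ) with he
    have he0 : (0 : ℤ) < e := by rw [he]; exact_mod_cast f.pos
    have heQ : (0 : ℚ) < (e : ℚ) := by exact_mod_cast he0
    have hfeq : (c : ℚ) / (e : ℚ) = f := Rat.num_div_den f
    -- q < f gives c k - e h ≥ 1
    have hu : 1 ≤ c * k - e * h := by
      have h1 : (h : ℚ) / (k : ℚ) < (c : ℚ) / (e : ℚ) := by rw [hqeq, hfeq]; exact hqf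
      rw [div_lt_div_iff₀ hkQ heQ] at h1
      have h2 : h * e < c * k := by exact_mod_cast h1
      have h3 := Int.add_one_le_iff.mpr h2
      linarith [mul_comm e h]
    -- show a/b ≤ c/e
    rw [← hfeq, div_le_div_iff₀ hbQ heQ]
    have key : a * e ≤ c * b := by
      by_contra hcon
      push_neg at hcon
      have hv : 1 ≤ e * a - c * b := by
        have h3 := Int.add_one_le_iff.mpr hcon
        linarith [mul_comm a e]
      have heq : e - c = (c * k - e * h) * x₀ + (e * a - c * b) * (k - h) := by
        linear_combination (-(e - c)) * hkey + (c * k - e * h) * hba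
      have hec : x₀ + (k - h) ≤ e - c := by
        have p1 : 0 ≤ (c * k - e * h - 1) * x₀ :=
          mul_nonneg (by linarith) (by linarith)
        have p2 : 0 ≤ (e * a - c * b - 1) * (k - h) :=
          mul_nonneg (by linarith) (by omega)
        linarith [heq, p1, p2]
      omega
    exact_mod_cast key
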